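/- Let S ⊂ [0,1]^D satisfy κ^{-1}ε^d ≤ vol_d(B(x,ε) ∩ S) ≤ κ ε^d for all x ∈ S and ε ∈ [0, diam S], with κ ≥ 1 and 1 ≤ d ≤ D. For τ > 0, let B(S,τ) = {x ∈ [0,1]^D : dist(x, S) ≤ τ}. Then for every x ∈ B(S,τ) and every ε with 2τ ≤ ε ≤ diam(S), there exist constants c, C > 0 depending only on κ, d, D such that c · ε^d τ^{D−d} ≤ vol_D(B(S,τ) ∩ B(x,ε)) ≤ C · ε^d τ^{D−d}. -/

import Mathlib

open MeasureTheory Metric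

section Aux
variable {D d : ℕ} {κ : ℝ}

lemma coord_dist_le (x y : EuclideanSpace ℝ (Fin D)) (i : Fin D) :
    |x i - y i| ≤ dist x y := by
  rw [EuclideanSpace.dist_eq, ← Real.sqrt_sq_eq_abs]
  apply Real.sqrt_le_sqrt
  have := Finset.single_le_sum (f := fun j => dist (x j) (y j)^2)
    (fun j _ => sq_nonneg _) (Finset.mem_univ i)
  simpa [Real.dist_eq, sq_abs] using this

lemma box_eq_preimage (l u : Fin D → ℝ) :
    {w : EuclideanSpace ℝ (Fin D) | ∀ i, w i ∈ Set.Icc (l i) (u i)} =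
      ((MeasurableEquiv.toLp 2 (Fin D → ℝ)).symm) ⁻¹' (Set.univ.pi fun i => Set.Icc (l i) (u i)) := by
  ext w
  simp only [Set.mem_preimage, Set.mem_pi, Set.mem_univ, forall_true_left, Set.mem_setOf_eq]
  rfl

lemma box_measurable (l u : Fin D → ℝ) :
    MeasurableSet {w : EuclideanSpace ℝ (Fin D) | ∀ i, w i ∈ Set.Icc (l i) (u i)} := by
  rw [box_eq_preimage]
  exact ((MeasurableEquiv.toLp 2 (Fin D → ℝ)).symm).measurable
    (MeasurableSet.univ_pi fun i => measurableSet_Icc)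

lemma box_volume (l u : Fin D → ℝ) :
    volume {w : EuclideanSpace ℝ (Fin D) | ∀ i, w i ∈ Set.Icc (l i) (u i)} =
      ∏ i, ENNReal.ofReal (u i - l i) := by
  have h := (EuclideanSpace.volume_preserving_symm_measurableEquiv_toLp (Fin D)).measure_preimage
    (s := Set.univ.pi fun i => Set.Icc (l i) (u i))
    (MeasurableSet.univ_pi (fun i => measurableSet_Icc)).nullMeasurableSet
  rw [box_eq_preimage, h, volume_pi_pi]
  simp [Real.volume_Icc]

lemma dist_le_of_coord {x y : EuclideanSpace ℝ (Fin D)} {s : ℝ} (hs : 0 ≤ s)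
    (h : ∀ i, |x i - y i| ≤ s) : dist x y ≤ s * Real.sqrt D := by
  rw [EuclideanSpace.dist_eq]
  have h1 : ∑ i, dist (x i) (y i) ^ 2 ≤ (D : ℝ) * s ^ 2 := by
    calc ∑ i, dist (x i) (y i) ^ 2 ≤ ∑ _i : Fin D, s ^ 2 := by
          apply Finset.sum_le_sum
          intro i _
          have := h i
          rw [Real.dist_eq]
          nlinarith [abs_nonneg (x i - y i)]
      _ = (D : ℝ) * s ^ 2 := by simp [mul_comm]
  calc Real.sqrt (∑ i, dist (x i) (y i) ^ 2) ≤ Real.sqrt ((D:ℝ) * s ^ 2) :=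
        Real.sqrt_le_sqrt h1
    _ = s * Real.sqrt D := by
        rw [Real.sqrt_mul' _ (sq_nonneg s), Real.sqrt_sq hs, mul_comm]

lemma cube_dist_le {x y : EuclideanSpace ℝ (Fin D)}
    (hx : ∀ i, x i ∈ Set.Icc (0:ℝ) 1) (hy : ∀ i, y i ∈ Set.Icc (0:ℝ) 1) :
    dist x y ≤ Real.sqrt D := by
  have := dist_le_of_coord (x := x) (y := y) (s := 1) zero_le_one (fun i => by
    have h1 := hx i; have h2 := hy i
    rw [abs_le]; constructor <;> [linarith [h1.1, h2.2]; linarith [h1.2, h2.1]])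
  simpa using this

lemma cube_bounded {S : Set (EuclideanSpace ℝ (Fin D))}
    (hS : S ⊆ {x | ∀ i, x i ∈ Set.Icc (0:ℝ) 1}) : Bornology.IsBounded S := by
  rw [Metric.isBounded_iff]
  exact ⟨Real.sqrt D, fun x hx y hy => cube_dist_le (hS hx) (hS hy)⟩

lemma diam_cube_le {S : Set (EuclideanSpace ℝ (Fin D))}
    (hS : S ⊆ {x | ∀ i, x i ∈ Set.Icc (0:ℝ) 1}) : diam S ≤ Real.sqrt D :=
  diam_le_of_forall_dist_le (Real.sqrt_nonneg _) (fun _x hx _y hy => cube_dist_le (hS hx) (hS hy))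

lemma upper_reg_ext {S : Set (EuclideanSpace ℝ (Fin D))} (hκ : 1 ≤ κ)
    (hSb : Bornology.IsBounded S)
    (hreg : ∀ x ∈ S, ∀ ε ∈ Set.Icc (0:ℝ) (diam S),
      ENNReal.ofReal (κ⁻¹ * ε ^ d) ≤ μH[(d:ℝ)] (closedBall x ε ∩ S) ∧
        μH[(d:ℝ)] (closedBall x ε ∩ S) ≤ ENNReal.ofReal (κ * ε ^ d))
    {x : EuclideanSpace ℝ (Fin D)} (hx : x ∈ S) {r : ℝ} (hr : 0 ≤ r) :
    μH[(d:ℝ)] (closedBall x r ∩ S) ≤ ENNReal.ofReal (κ * r ^ d) := by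
  rcases le_or_gt r (diam S) with h | h
  · exact (hreg x hx r ⟨hr, h⟩).2
  · have hsub : closedBall x r ∩ S ⊆ closedBall x (diam S) ∩ S := by
      intro z hz
      exact ⟨mem_closedBall.2 (dist_le_diam_of_mem hSb hz.2 hx), hz.2⟩
    calc μH[(d:ℝ)] (closedBall x r ∩ S) ≤ μH[(d:ℝ)] (closedBall x (diam S) ∩ S) :=
          measure_mono hsub
      _ ≤ ENNReal.ofReal (κ * diam S ^ d) := (hreg x hx (diam S) ⟨diam_nonneg, le_rfl⟩).2
      _ ≤ ENNReal.ofReal (κ * r ^ d) := by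
          apply ENNReal.ofReal_le_ofReal
          have : diam S ^ d ≤ r ^ d := pow_le_pow_left₀ diam_nonneg h.le d
          nlinarith

lemma sum_le_of_disjoint {ι : Type*} {μ : Measure (EuclideanSpace ℝ (Fin D))}
    {t : Set ι} (htc : t.Countable) {B : ι → Set (EuclideanSpace ℝ (Fin D))}
    (hBm : ∀ b ∈ t, MeasurableSet (B b)) (hdisj : t.PairwiseDisjoint B)
    {A : ι → Set (EuclideanSpace ℝ (Fin D))} (hAB : ∀ b ∈ t, A b ⊆ B b)
    {T : Set (EuclideanSpace ℝ (Fin D))} (hAT : ∀ b ∈ t, A b ⊆ T)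
    {v : ENNReal} (hv : ∀ b ∈ t, v ≤ μ (A b)) :
    ∑' (_ : t), v ≤ μ T := by
  set U := ⋃ b ∈ t, A b with hU
  have hUT : U ⊆ T := Set.iUnion₂_subset hAT
  calc ∑' (_ : t), v ≤ ∑' (b : t), (μ.restrict U) (B b) := by
        apply ENNReal.tsum_le_tsum
        intro b
        calc v ≤ μ (A b) := hv b b.2
          _ ≤ μ (B b ∩ U) := measure_mono (Set.subset_inter (hAB b b.2)
              (Set.subset_biUnion_of_mem b.2))
          _ = (μ.restrict U) (B b) := (Measure.restrict_apply (hBm b b.2)).symm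
    _ = (μ.restrict U) (⋃ b ∈ t, B b) := (measure_biUnion htc hdisj (fun b hb => hBm b hb)).symm
    _ ≤ (μ.restrict U) Set.univ := measure_mono (Set.subset_univ _)
    _ = μ U := by rw [Measure.restrict_apply_univ]
    _ ≤ μ T := measure_mono hUT

end Aux

theorem stmt10 (D d : ℕ) (hd1 : 1 ≤ d) (hdD : d ≤ D) (κ : ℝ) (hκ : 1 ≤ κ) :
    ∃ c C : ℝ, 0 < c ∧ 0 < C ∧
      ∀ (S : Set (EuclideanSpace ℝ (Fin D))), S.Nonempty →
        S ⊆ {x | ∀ i, x i ∈ Set.Icc (0:ℝ) 1} →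
        (∀ x ∈ S, ∀ ε ∈ Set.Icc (0:ℝ) (diam S),
          ENNReal.ofReal (κ⁻¹ * ε ^ d) ≤ μH[(d:ℝ)] (closedBall x ε ∩ S) ∧
            μH[(d:ℝ)] (closedBall x ε ∩ S) ≤ ENNReal.ofReal (κ * ε ^ d)) →
        ∀ (τ ε : ℝ), 0 < τ → 2 * τ ≤ ε → ε ≤ diam S →
        ∀ x ∈ {w : EuclideanSpace ℝ (Fin D) |
            (∀ i, w i ∈ Set.Icc (0:ℝ) 1) ∧ infDist w S ≤ τ},
          ENNReal.ofReal (c * ε ^ d * τ ^ (D - d)) ≤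
              volume ({w : EuclideanSpace ℝ (Fin D) |
                (∀ i, w i ∈ Set.Icc (0:ℝ) 1) ∧ infDist w S ≤ τ} ∩ closedBall x ε) ∧
            volume ({w : EuclideanSpace ℝ (Fin D) |
                (∀ i, w i ∈ Set.Icc (0:ℝ) 1) ∧ infDist w S ≤ τ} ∩ closedBall x ε) ≤
              ENNReal.ofReal (C * ε ^ d * τ ^ (D - d)) := by
  have hκ0 : (0:ℝ) < κ := lt_of_lt_of_le zero_lt_one hκ
  have hD1 : 1 ≤ D := le_trans hd1 hdD
  have hsqrtD : (0:ℝ) < Real.sqrt D := Real.sqrt_pos.2 (by exact_mod_cast hD1)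
  refine ⟨κ⁻¹ * κ⁻¹ * ((8:ℝ)⁻¹)^d * ((2:ℝ)⁻¹)^d * ((2*Real.sqrt D)⁻¹)^D,
    κ * κ * ((4:ℝ)^d) * ((2:ℝ)⁻¹)^d * ((16:ℝ)^D), by positivity, by positivity, ?_⟩
  intro S hSne hScube hreg τ ε hτ h2τ hεdiam x hx
  obtain ⟨hxcube, hxdist⟩ := hx
  have hε : 0 < ε := lt_of_lt_of_le (by linarith) h2τ
  have hSb : Bornology.IsBounded S := cube_bounded hScube
  have hdiam : diam S ≤ Real.sqrt D := diam_cube_le hScube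
  -- point of S close to x
  obtain ⟨xt, hxtS, hxtdist⟩ := (Metric.infDist_lt_iff hSne).1
    (lt_of_le_of_lt hxdist (by linarith : τ < 5*τ/4))
  set NB : Set (EuclideanSpace ℝ (Fin D)) :=
    {w | (∀ i, w i ∈ Set.Icc (0:ℝ) 1) ∧ infDist w S ≤ τ} with hNB
  constructor
  · -- LOWER BOUND
    set s : ℝ := τ / (2 * Real.sqrt D) with hs_def
    have hs_pos : 0 < s := by positivity
    have hs_sqrt : s * Real.sqrt D = τ / 2 := by
      rw [hs_def]; field_simp
    have hs_le : s ≤ 2⁻¹ := by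
      rw [hs_def, div_le_iff₀ (by positivity)]
      have h1 : τ ≤ Real.sqrt D / 2 := by nlinarith
      nlinarith [hsqrtD, Real.sq_sqrt (show (0:ℝ) ≤ D by positivity),
        Real.one_le_sqrt.2 (show (1:ℝ) ≤ D by exact_mod_cast hD1)]
    obtain ⟨t, htsub, htdisj, htcov⟩ :=
      Vitali.exists_disjoint_subfamily_covering_enlargement_closedBall
        (S ∩ closedBall xt (ε/8)) id (fun _ => τ/2) (τ/2) (fun a _ => le_rfl) 4 (by norm_num)
    have htc : t.Countable := htdisj.countable_of_nonempty_interior (fun b _ =>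
      ⟨b, ball_subset_interior_closedBall (mem_ball_self (by linarith))⟩)
    set lo : EuclideanSpace ℝ (Fin D) → Fin D → ℝ :=
      fun b i => if b i + s ≤ 1 then b i else b i - s with hlo
    set K : EuclideanSpace ℝ (Fin D) → Set (EuclideanSpace ℝ (Fin D)) :=
      fun b => {w | ∀ i, w i ∈ Set.Icc (lo b i) (lo b i + s)} with hK
    have hKcoord : ∀ b, ∀ w ∈ K b, ∀ i, |w i - b i| ≤ s := by
      intro b w hw i
      have h1 := hw i
      rw [hlo] at h1
      rw [abs_le]
      by_cases h : b i + s ≤ 1 <;> simp [h] at h1 <;>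
        constructor <;> linarith [h1.1, h1.2, hs_pos.le]
    have hKball : ∀ b, K b ⊆ closedBall b (τ/2) := by
      intro b w hw
      rw [mem_closedBall, ← hs_sqrt]
      exact dist_le_of_coord hs_pos.le (hKcoord b w hw)
    have hKdisj : t.PairwiseDisjoint K := htdisj.mono hKball
    have hKmeas : ∀ b, MeasurableSet (K b) := fun b => box_measurable _ _
    have hKvol : ∀ b, volume (K b) = ENNReal.ofReal (s^D) := by
      intro b
      rw [hK]
      simp only
      rw [box_volume]
      simp only [add_sub_cancel_left]
      rw [Finset.prod_const, ← ENNReal.ofReal_pow hs_pos.le]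
      simp
    have hKcube : ∀ b ∈ t, ∀ w ∈ K b, ∀ i, w i ∈ Set.Icc (0:ℝ) 1 := by
      intro b hb w hw i
      have hbS : b ∈ S := ((htsub hb)).1
      have hb01 := hScube hbS i
      have h1 := hw i
      rw [hlo] at h1
      by_cases h : b i + s ≤ 1 <;> simp [h] at h1 <;>
        exact ⟨by linarith [hb01.1, h1.1, hs_pos.le], by linarith [hb01.2, h1.2, hs_pos.le]⟩
    have hKtarget : ∀ b ∈ t, K b ⊆ NB ∩ closedBall x ε := by
      intro b hb w hw
      have hbS : b ∈ S := (htsub hb).1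
      have hbxt : dist b xt ≤ ε/8 := (htsub hb).2
      have hwb : dist w b ≤ τ/2 := hKball b hw
      refine ⟨⟨hKcube b hb w hw, ?_⟩, ?_⟩
      · exact le_trans (infDist_le_dist_of_mem hbS) (by linarith)
      · rw [mem_closedBall]
        calc dist w x ≤ dist w b + dist b xt + dist xt x := dist_triangle4 w b xt x
          _ ≤ τ/2 + ε/8 + 5*τ/4 := by
              have h1 : dist xt x ≤ 5*τ/4 := by rw [dist_comm]; exact hxtdist.le
              gcongr
          _ ≤ ε := by linarith
    -- counting
    have hcover : closedBall xt (ε/8) ∩ S ⊆ ⋃ b ∈ t, (closedBall b (2*τ) ∩ S) := by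
      intro z hz
      obtain ⟨b, hbt, hbsub⟩ := htcov z ⟨hz.2, hz.1⟩
      have : z ∈ closedBall (id z) (τ/2) := mem_closedBall_self (by linarith)
      have hz2 : z ∈ closedBall (id b) (4 * (τ/2)) := hbsub this
      simp only [id] at hz2
      refine Set.mem_biUnion hbt ⟨?_, hz.2⟩
      rw [mem_closedBall] at hz2 ⊢
      linarith
    have hcount : ENNReal.ofReal (κ⁻¹ * (ε/8)^d) ≤
        ∑' (_ : t), ENNReal.ofReal (κ * (2*τ)^d) := by
      calc ENNReal.ofReal (κ⁻¹ * (ε/8)^d)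
          ≤ μH[(d:ℝ)] (closedBall xt (ε/8) ∩ S) :=
            (hreg xt hxtS (ε/8) ⟨by positivity, by linarith⟩).1
        _ ≤ μH[(d:ℝ)] (⋃ b ∈ t, (closedBall b (2*τ) ∩ S)) := measure_mono hcover
        _ ≤ ∑' (b : t), μH[(d:ℝ)] (closedBall (b:EuclideanSpace ℝ (Fin D)) (2*τ) ∩ S) :=
            measure_biUnion_le _ htc _
        _ ≤ ∑' (_ : t), ENNReal.ofReal (κ * (2*τ)^d) := by
            apply ENNReal.tsum_le_tsum
            intro b
            exact (hreg b (htsub b.2).1 (2*τ) ⟨by linarith, by linarith⟩).2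
    -- volume bound
    have hA0 : ENNReal.ofReal (κ * (2*τ)^d) ≠ 0 := by
      rw [ne_eq, ENNReal.ofReal_eq_zero, not_le]
      positivity
    have hAtop : ENNReal.ofReal (κ * (2*τ)^d) ≠ ⊤ := ENNReal.ofReal_ne_top
    calc ENNReal.ofReal (κ⁻¹ * κ⁻¹ * ((8:ℝ)⁻¹)^d * ((2:ℝ)⁻¹)^d * ((2*Real.sqrt D)⁻¹)^D
            * ε ^ d * τ ^ (D - d))
        = ENNReal.ofReal (s^D / (κ * (2*τ)^d) * (κ⁻¹ * (ε/8)^d)) := by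
          congr 1
          have e1 : s ^ D = (τ^(D-d) * τ^d) * ((2*Real.sqrt D)⁻¹)^D := by
            rw [hs_def, div_eq_mul_inv, mul_pow, pow_sub_mul_pow τ hdD]
          have e2 : (ε/8)^d = ε^d * ((8:ℝ)⁻¹)^d := by rw [div_eq_mul_inv, mul_pow]
          have e3 : (2*τ)^d = 2^d * τ^d := mul_pow 2 τ d
          rw [e1, e2, e3]
          have hτd : (0:ℝ) < τ^d := by positivity
          field_simp
          ring_nf
          rw [← mul_pow]
          norm_num
      _ = ENNReal.ofReal (s^D) / ENNReal.ofReal (κ * (2*τ)^d)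
            * ENNReal.ofReal (κ⁻¹ * (ε/8)^d) := by
          rw [ENNReal.ofReal_mul (by positivity), ENNReal.ofReal_div_of_pos (by positivity)]
      _ ≤ ENNReal.ofReal (s^D) / ENNReal.ofReal (κ * (2*τ)^d)
            * ∑' (_ : t), ENNReal.ofReal (κ * (2*τ)^d) := by
          exact mul_le_mul_right hcount _
      _ = ∑' (_ : t), ENNReal.ofReal (s^D) := by
          rw [ENNReal.tsum_mul_left.symm]
          congr 1
          ext b
          rw [ENNReal.div_mul_cancel hA0 hAtop]
      _ = ∑' (b : t), volume (K b) := by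
          congr 1; ext b; rw [hKvol]
      _ = volume (⋃ b ∈ t, K b) := (measure_biUnion htc hKdisj (fun b _ => hKmeas b)).symm
      _ ≤ volume (NB ∩ closedBall x ε) := measure_mono (Set.iUnion₂_subset hKtarget)
  · -- UPPER BOUND
    obtain ⟨t', htsub', htdisj', htcov'⟩ :=
      Vitali.exists_disjoint_subfamily_covering_enlargement_closedBall
        (S ∩ closedBall x (ε + 2*τ)) id (fun _ => 2*τ) (2*τ) (fun a _ => le_rfl) 4 (by norm_num)
    have htc' : t'.Countable := htdisj'.countable_of_nonempty_interior (fun b _ =>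
      ⟨b, ball_subset_interior_closedBall (mem_ball_self (by linarith))⟩)
    have hcover' : NB ∩ closedBall x ε ⊆ ⋃ b ∈ t', closedBall b (8*τ) := by
      intro w hw
      obtain ⟨y, hyS, hywdist⟩ := (Metric.infDist_lt_iff hSne).1
        (lt_of_le_of_lt hw.1.2 (by linarith : τ < 2*τ))
      have hyT : y ∈ S ∩ closedBall x (ε + 2*τ) := by
        refine ⟨hyS, mem_closedBall.2 ?_⟩
        calc dist y x ≤ dist y w + dist w x := dist_triangle y w x
          _ ≤ 2*τ + ε := by
              have h1 : dist y w ≤ 2*τ := by rw [dist_comm]; exact hywdist.le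
              have h2 : dist w x ≤ ε := mem_closedBall.1 hw.2
              linarith
          _ = ε + 2*τ := by ring
      obtain ⟨b, hbt, hbsub⟩ := htcov' y hyT
      have hwy : w ∈ closedBall (id y) (2*τ) := mem_closedBall.2 (by
        simpa using hywdist.le)
      have := hbsub hwy
      simp only [id] at this
      refine Set.mem_biUnion hbt ?_
      rw [mem_closedBall] at this ⊢
      linarith
    -- counting
    have hcount' : ∑' (_ : t'), ENNReal.ofReal (κ⁻¹ * (2*τ)^d) ≤
        ENNReal.ofReal (κ * (4*ε)^d) := by
      calc ∑' (_ : t'), ENNReal.ofReal (κ⁻¹ * (2*τ)^d)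
          ≤ μH[(d:ℝ)] (closedBall xt (4*ε) ∩ S) := by
            apply sum_le_of_disjoint htc' (fun b _ => measurableSet_closedBall) htdisj'
              (fun b _ => Set.inter_subset_left (t := S))
            · intro b hb z hz
              have hbS : b ∈ S := (htsub' hb).1
              have hbx : dist b x ≤ ε + 2*τ := (htsub' hb).2
              refine ⟨mem_closedBall.2 ?_, hz.2⟩
              calc dist z xt ≤ dist z b + dist b x + dist x xt := dist_triangle4 z b x xt
                _ ≤ 4*ε := by
                    have h1 : dist z b ≤ 2*τ := mem_closedBall.1 hz.1
                    linarith [hxtdist.le]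
            · intro b hb
              exact (hreg b (htsub' hb).1 (2*τ) ⟨by linarith, by linarith⟩).1
        _ ≤ ENNReal.ofReal (κ * (4*ε)^d) :=
            upper_reg_ext hκ hSb hreg hxtS (by linarith)
    have hA0' : ENNReal.ofReal (κ⁻¹ * (2*τ)^d) ≠ 0 := by
      rw [ne_eq, ENNReal.ofReal_eq_zero, not_le]
      positivity
    have hAtop' : ENNReal.ofReal (κ⁻¹ * (2*τ)^d) ≠ ⊤ := ENNReal.ofReal_ne_top
    calc volume (NB ∩ closedBall x ε)
        ≤ volume (⋃ b ∈ t', closedBall b (8*τ)) := measure_mono hcover'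
      _ ≤ ∑' (b : t'), volume (closedBall (b:EuclideanSpace ℝ (Fin D)) (8*τ)) :=
          measure_biUnion_le _ htc' _
      _ ≤ ∑' (_ : t'), ENNReal.ofReal ((16*τ)^D) := by
          apply ENNReal.tsum_le_tsum
          intro b
          calc volume (closedBall (b:EuclideanSpace ℝ (Fin D)) (8*τ))
              ≤ volume {w : EuclideanSpace ℝ (Fin D) |
                  ∀ i, w i ∈ Set.Icc ((b:EuclideanSpace ℝ (Fin D)) i - 8*τ)
                    ((b:EuclideanSpace ℝ (Fin D)) i + 8*τ)} := by
                apply measure_mono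
                intro w hw i
                have := coord_dist_le w b i
                have h2 : dist w (b:EuclideanSpace ℝ (Fin D)) ≤ 8*τ := mem_closedBall.1 hw
                rw [abs_le] at this
                constructor <;> [linarith [this.1]; linarith [this.2]]
            _ = ENNReal.ofReal ((16*τ)^D) := by
                rw [box_volume]
                have : ∀ i : Fin D, ((b:EuclideanSpace ℝ (Fin D)) i + 8*τ
                    - ((b:EuclideanSpace ℝ (Fin D)) i - 8*τ)) = 16*τ := fun i => by ring
                simp only [this]
                rw [Finset.prod_const, ← ENNReal.ofReal_pow (by linarith)]
                simp
      _ = ENNReal.ofReal ((16*τ)^D) / ENNReal.ofReal (κ⁻¹ * (2*τ)^d)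
            * ∑' (_ : t'), ENNReal.ofReal (κ⁻¹ * (2*τ)^d) := by
          rw [ENNReal.tsum_mul_left.symm]
          congr 1
          ext b
          rw [ENNReal.div_mul_cancel hA0' hAtop']
      _ ≤ ENNReal.ofReal ((16*τ)^D) / ENNReal.ofReal (κ⁻¹ * (2*τ)^d)
            * ENNReal.ofReal (κ * (4*ε)^d) := mul_le_mul_right hcount' _
      _ = ENNReal.ofReal ((16*τ)^D / (κ⁻¹ * (2*τ)^d) * (κ * (4*ε)^d)) := by
          rw [ENNReal.ofReal_mul (show (0:ℝ) ≤ (16*τ)^D / (κ⁻¹ * (2*τ)^d) by positivity),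
            ENNReal.ofReal_div_of_pos (show (0:ℝ) < κ⁻¹ * (2*τ)^d by positivity)]
      _ ≤ ENNReal.ofReal (κ * κ * ((4:ℝ)^d) * ((2:ℝ)⁻¹)^d * ((16:ℝ)^D) * ε ^ d * τ ^ (D - d)) := by
          apply ENNReal.ofReal_le_ofReal
          apply le_of_eq
          have e1 : (16*τ) ^ D = (16:ℝ)^D * (τ^(D-d) * τ^d) := by
            rw [mul_pow, pow_sub_mul_pow τ hdD]
          have e3 : (2*τ)^d = 2^d * τ^d := mul_pow 2 τ d
          have e4 : (4*ε)^d = 4^d * ε^d := mul_pow 4 ε d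
          rw [e1, e3, e4]
          have hτd : (0:ℝ) < τ^d := by positivity
          field_simp
          ring_nf
          rw [← mul_pow]
          norm_num
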